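/- A quadratic normalisation (A, N) is of class (4,3) if and only if the domino rule is valid for N̄. -/
import Mathlib


/-- Apply `N` to the length-two factor of `w` at positions `i, i+1` (1-indexed). -/
def applyAt {A : Type*} (N : List A → List A) (i : ℕ) (w : List A) : List A :=
  w.take (i - 1) ++ N ((w.drop (i - 1)).take 2) ++ w.drop (i + 1)

/-- Apply `N` to length-two factors at the given sequence of positions,
leftmost position in the list applied first. -/
def applySeq {A : Type*} (N : List A → List A) (pos : List ℕ) (w : List A) : List A :=
  pos.foldl (fun v i => applyAt N i v) w

/-- The alternating sequence of positions `s, 3-s, s, ...` of length `k` (with `s ∈ {1,2}`). -/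
def altSeq : ℕ → ℕ → List ℕ
  | _, 0 => []
  | s, k + 1 => s :: altSeq (3 - s) k

/-- A quadratic normalisation: a length-preserving map, identity on letters,
satisfying `N(u|v|w) = N(u|N(v)|w)`, for which a word is normal iff all its
length-two factors are, and which is computed by finitely many applications
of its restriction to length-two factors. -/
structure QuadraticNormalisation {A : Type*} (N : List A → List A) : Prop where
  len : ∀ w : List A, (N w).length = w.length
  letter : ∀ a : A, N [a] = [a]
  mid : ∀ u v w : List A, N (u ++ v ++ w) = N (u ++ N v ++ w)
  normal_iff : ∀ w : List A, N w = w ↔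
    ∀ (u v : List A) (a b : A), w = u ++ a :: b :: v → N [a, b] = [a, b]
  reach : ∀ w : List A, ∃ pos : List ℕ, N w = applySeq N pos w

/-- The normalisation is of left-class `m`. -/
def LeftClass {A : Type*} (N : List A → List A) (m : ℕ) : Prop :=
  ∀ w : List A, w.length = 3 → N w = applySeq N (altSeq 1 m) w

/-- The normalisation is of right-class `n`. -/
def RightClass {A : Type*} (N : List A → List A) (n : ℕ) : Prop :=
  ∀ w : List A, w.length = 3 → N w = applySeq N (altSeq 2 n) w

/-- The normalisation is of class `(m, n)`. -/
def IsClass {A : Type*} (N : List A → List A) (m n : ℕ) : Prop :=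
  LeftClass N m ∧ RightClass N n

/-- `e` is an `N`-neutral element: `N(w|e) = N(e|w) = N(w)|e` for every word `w`. -/
def Neutral {A : Type*} (N : List A → List A) (e : A) : Prop :=
  ∀ w : List A, N (w ++ [e]) = N w ++ [e] ∧ N (e :: w) = N w ++ [e]

/-- The domino rule is valid for the restriction of `N` to length-two words. -/
def DominoRule {A : Type*} (N : List A → List A) : Prop :=
  ∀ s1 s2 s1' s2' t0 t1 t2 : A,
    N [t0, s1] = [s1', t1] → N [t1, s2] = [s2', t2] →
    N [s1, s2] = [s1, s2] → N [s1', t1] = [s1', t1] → N [s2', t2] = [s2', t2] →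
    N [s1', s2'] = [s1', s2']


section QNaux
variable {A : Type*} {N : List A → List A}

lemma qn_idem (hN : QuadraticNormalisation N) (v : List A) : N (N v) = N v := by
  have := hN.mid [] v []
  simpa using this.symm

lemma qn_two (hN : QuadraticNormalisation N) (a b : A) : ∃ p q, N [a, b] = [p, q] := by
  have h := hN.len [a, b]
  match hv : N [a, b] with
  | [p, q] => exact ⟨p, q, rfl⟩
  | [] | [_] | _ :: _ :: _ :: _ => rw [hv] at h; simp at h

lemma qn_applyAt1 (a b c : A) : applyAt N 1 [a, b, c] = N [a, b] ++ [c] := by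
  simp [applyAt]

lemma qn_applyAt2 (a b c : A) : applyAt N 2 [a, b, c] = a :: N [b, c] := by
  simp [applyAt]

lemma qn_NapplyAt1 (hN : QuadraticNormalisation N) (a b c : A) :
    N (N [a, b] ++ [c]) = N [a, b, c] := by
  have := hN.mid [] [a, b] [c]
  simpa using this.symm

lemma qn_NapplyAt2 (hN : QuadraticNormalisation N) (a b c : A) :
    N (a :: N [b, c]) = N [a, b, c] := by
  have := hN.mid [a] [b, c] []
  simpa using this.symm

lemma qn_fixed3 (hN : QuadraticNormalisation N) {x y z : A}
    (h1 : N [x, y] = [x, y]) (h2 : N [y, z] = [y, z]) :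
    N [x, y, z] = [x, y, z] := by
  rw [hN.normal_iff]
  rintro u v a b h
  rcases u with _ | ⟨u1, _ | ⟨u2, u⟩⟩
  · simp at h; obtain ⟨rfl, rfl, -⟩ := h; exact h1
  · simp at h; obtain ⟨-, rfl, rfl, -⟩ := h; exact h2
  · apply_fun List.length at h; simp at h; omega

lemma qn_right3 (hN : QuadraticNormalisation N) (hD : DominoRule N) (a b c : A) :
    N [a, b, c] = applySeq N (altSeq 2 3) [a, b, c] := by
  obtain ⟨b', c', h1⟩ := qn_two hN b c
  obtain ⟨a', b'', h2⟩ := qn_two hN a b'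
  obtain ⟨b3, c2, h3⟩ := qn_two hN b'' c'
  have f1 : N [b', c'] = [b', c'] := by rw [← h1]; exact qn_idem hN _
  have f2 : N [a', b''] = [a', b''] := by rw [← h2]; exact qn_idem hN _
  have f3 : N [b3, c2] = [b3, c2] := by rw [← h3]; exact qn_idem hN _
  have fd : N [a', b3] = [a', b3] := hD b' c' a' b3 a b'' c2 h2 h3 f1 f2 f3
  have hfix : N [a', b3, c2] = [a', b3, c2] := qn_fixed3 hN fd f3
  have s1 : applyAt N 2 [a, b, c] = [a, b', c'] := by rw [qn_applyAt2, h1]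
  have s2 : applyAt N 1 [a, b', c'] = [a', b'', c'] := by rw [qn_applyAt1, h2]; rfl
  have s3 : applyAt N 2 [a', b'', c'] = [a', b3, c2] := by rw [qn_applyAt2, h3]
  have key : N [a, b, c] = [a', b3, c2] := by
    calc N [a, b, c] = N (a :: N [b, c]) := (qn_NapplyAt2 hN a b c).symm
      _ = N [a, b', c'] := by rw [h1]
      _ = N (N [a, b'] ++ [c']) := (qn_NapplyAt1 hN a b' c').symm
      _ = N [a', b'', c'] := by rw [h2]; rfl
      _ = N (a' :: N [b'', c']) := (qn_NapplyAt2 hN a' b'' c').symm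
      _ = N [a', b3, c2] := by rw [h3]
      _ = [a', b3, c2] := hfix
  have hs : applySeq N (altSeq 2 3) [a, b, c] = [a', b3, c2] := by
    show applyAt N 2 (applyAt N 1 (applyAt N 2 [a, b, c])) = _
    rw [s1, s2, s3]
  rw [key, hs]

lemma qn_left4 (hN : QuadraticNormalisation N) (hD : DominoRule N) (a b c : A) :
    N [a, b, c] = applySeq N (altSeq 1 4) [a, b, c] := by
  obtain ⟨a1, b1, h1⟩ := qn_two hN a b
  obtain ⟨b2, c1, h2⟩ := qn_two hN b1 c
  obtain ⟨a2, b3, h3⟩ := qn_two hN a1 b2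
  obtain ⟨b4, c2, h4⟩ := qn_two hN b3 c1
  have f2 : N [b2, c1] = [b2, c1] := by rw [← h2]; exact qn_idem hN _
  have f3 : N [a2, b3] = [a2, b3] := by rw [← h3]; exact qn_idem hN _
  have f4 : N [b4, c2] = [b4, c2] := by rw [← h4]; exact qn_idem hN _
  have fd : N [a2, b4] = [a2, b4] := hD b2 c1 a2 b4 a1 b3 c2 h3 h4 f2 f3 f4
  have hfix : N [a2, b4, c2] = [a2, b4, c2] := qn_fixed3 hN fd f4
  have s1 : applyAt N 1 [a, b, c] = [a1, b1, c] := by rw [qn_applyAt1, h1]; rfl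
  have s2 : applyAt N 2 [a1, b1, c] = [a1, b2, c1] := by rw [qn_applyAt2, h2]
  have s3 : applyAt N 1 [a1, b2, c1] = [a2, b3, c1] := by rw [qn_applyAt1, h3]; rfl
  have s4 : applyAt N 2 [a2, b3, c1] = [a2, b4, c2] := by rw [qn_applyAt2, h4]
  have key : N [a, b, c] = [a2, b4, c2] := by
    calc N [a, b, c] = N (N [a, b] ++ [c]) := (qn_NapplyAt1 hN a b c).symm
      _ = N [a1, b1, c] := by rw [h1]; rfl
      _ = N (a1 :: N [b1, c]) := (qn_NapplyAt2 hN a1 b1 c).symm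
      _ = N [a1, b2, c1] := by rw [h2]
      _ = N (N [a1, b2] ++ [c1]) := (qn_NapplyAt1 hN a1 b2 c1).symm
      _ = N [a2, b3, c1] := by rw [h3]; rfl
      _ = N (a2 :: N [b3, c1]) := (qn_NapplyAt2 hN a2 b3 c1).symm
      _ = N [a2, b4, c2] := by rw [h4]
      _ = [a2, b4, c2] := hfix
  have hs : applySeq N (altSeq 1 4) [a, b, c] = [a2, b4, c2] := by
    show applyAt N 2 (applyAt N 1 (applyAt N 2 (applyAt N 1 [a, b, c]))) = _
    rw [s1, s2, s3, s4]
  rw [key, hs]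

end QNaux

/-- a quadratic normalisation is of class `(4,3)` iff the domino
rule is valid for `N̄`. -/
theorem class43_iff_domino {A : Type*} (N : List A → List A)
    (hN : QuadraticNormalisation N) :
    IsClass N 4 3 ↔ DominoRule N := by
  constructor
  · rintro ⟨-, hr⟩ s1 s2 s1' s2' t0 t1 t2 e1 e2 n1 n2 n3
    have h := hr [t0, s1, s2] rfl
    have hs : applySeq N (altSeq 2 3) [t0, s1, s2] = [s1', s2', t2] := by
      show applyAt N 2 (applyAt N 1 (applyAt N 2 [t0, s1, s2])) = _
      rw [qn_applyAt2, n1, qn_applyAt1, e1]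
      show applyAt N 2 [s1', t1, s2] = _
      rw [qn_applyAt2, e2]
    rw [hs] at h
    have hfix : N [s1', s2', t2] = [s1', s2', t2] := by rw [← h]; exact qn_idem hN _
    exact (hN.normal_iff [s1', s2', t2]).1 hfix [] [t2] s1' s2' rfl
  · intro hD
    constructor
    · intro w hw
      match w, hw with
      | [a, b, c], _ => exact qn_left4 hN hD a b c
    · intro w hw
      match w, hw with
      | [a, b, c], _ => exact qn_right3 hN hD a b c
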